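/- For x ∈ (0, π/2) and t ∈ [−1, 1], |arctan(t · tan x) − t·x| ≤ |t|·(tan x − x). In particular, the pinhole-model azimuth arctan(((i_x − c_x)/f_I)) and the linear approximation ((i_x − c_x)/w)·f_x (with f_I = w/(2 tan(f_x/2)), c_x = w/2, t = (i_x − c_x)/(w/2), x = f_x/2) differ by at most tan(f_x/2) − f_x/2. -/

import Mathlib

open Real

lemma tan_convex_aux {x : ℝ} (hx0 : 0 ≤ x) (hx : x < π / 2) {t : ℝ}
    (ht0 : 0 ≤ t) (ht1 : t ≤ 1) : Real.tan (t * x) ≤ t * Real.tan x := by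
  have key : MonotoneOn (fun y => t * Real.tan y - Real.tan (t * y)) (Set.Icc 0 x) := by
    have hd : ∀ y ∈ Set.Icc 0 x, HasDerivAt (fun y => t * Real.tan y - Real.tan (t * y))
        (t * (1 / Real.cos y ^ 2) - 1 / Real.cos (t * y) ^ 2 * t) y := by
      intro y hy
      have hy2 : y < π / 2 := lt_of_le_of_lt hy.2 hx
      have hcy : Real.cos y ≠ 0 := by
        have := Real.cos_pos_of_mem_Ioo ⟨by linarith [hy.1, pi_pos], hy2⟩
        positivity
      have hty : t * y ≤ y := by nlinarith [hy.1]
      have hty0 : 0 ≤ t * y := mul_nonneg ht0 hy.1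
      have hcty : Real.cos (t * y) ≠ 0 := by
        have := Real.cos_pos_of_mem_Ioo (show t * y ∈ Set.Ioo (-(π/2)) (π/2) from
          ⟨by linarith [pi_pos], by linarith⟩)
        positivity
      have h1 : HasDerivAt (fun y => t * Real.tan y) (t * (1 / Real.cos y ^ 2)) y :=
        (Real.hasDerivAt_tan hcy).const_mul t
      have h2 : HasDerivAt (fun y => Real.tan (t * y)) (1 / Real.cos (t * y) ^ 2 * t) y := by
        have := (Real.hasDerivAt_tan hcty).comp y ((hasDerivAt_id y).const_mul t)
        simpa [Function.comp_def] using this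
      exact h1.sub h2
    apply monotoneOn_of_deriv_nonneg (convex_Icc 0 x)
    · exact fun y hy => ((hd y hy).continuousAt).continuousWithinAt
    · intro y hy
      rw [interior_Icc] at hy
      exact ((hd y (Set.mem_Icc_of_Ioo hy)).differentiableAt).differentiableWithinAt
    · intro y hy
      rw [interior_Icc] at hy
      rw [(hd y (Set.mem_Icc_of_Ioo hy)).deriv]
      have hy2 : y < π / 2 := lt_of_lt_of_le hy.2 (le_of_lt hx)
      have hty : t * y ≤ y := by nlinarith [hy.1.le]
      have hty0 : 0 ≤ t * y := mul_nonneg ht0 hy.1.le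
      have hcy : 0 < Real.cos y := Real.cos_pos_of_mem_Ioo ⟨by linarith [pi_pos], hy2⟩
      have hcty : Real.cos y ≤ Real.cos (t * y) :=
        Real.cos_le_cos_of_nonneg_of_le_pi hty0 (by linarith [pi_pos]) hty
      have : 1 / Real.cos (t * y) ^ 2 ≤ 1 / Real.cos y ^ 2 := by
        apply one_div_le_one_div_of_le (by positivity)
        nlinarith
      nlinarith
  have h0 : (0 : ℝ) ∈ Set.Icc 0 x := ⟨le_refl _, hx0⟩
  have hxx : x ∈ Set.Icc 0 x := ⟨hx0, le_refl _⟩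
  have := key h0 hxx hx0
  simp [Real.tan_zero] at this
  linarith

lemma arctan_le_self_of_nonneg {u : ℝ} (hu : 0 ≤ u) : Real.arctan u ≤ u := by
  have ha0 : 0 ≤ Real.arctan u := by
    rw [← Real.arctan_zero]; exact Real.arctan_strictMono.monotone hu
  calc Real.arctan u ≤ Real.tan (Real.arctan u) :=
        Real.le_tan ha0 (Real.arctan_lt_pi_div_two u)
    _ = u := Real.tan_arctan u

lemma main_aux {x : ℝ} (hx : x ∈ Set.Ioo 0 (π / 2)) {t : ℝ} (ht0 : 0 ≤ t) (ht1 : t ≤ 1) :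
    |Real.arctan (t * Real.tan x) - t * x| ≤ t * (Real.tan x - x) := by
  obtain ⟨hx0, hx2⟩ := hx
  have htanpos : 0 < Real.tan x := Real.tan_pos_of_pos_of_lt_pi_div_two hx0 hx2
  have hlow : t * x ≤ Real.arctan (t * Real.tan x) := by
    have h1 : Real.tan (t * x) ≤ t * Real.tan x := tan_convex_aux hx0.le hx2 ht0 ht1
    have h2 : Real.arctan (Real.tan (t * x)) = t * x :=
      Real.arctan_tan (by nlinarith [pi_pos]) (by nlinarith)
    calc t * x = Real.arctan (Real.tan (t * x)) := h2.symm
      _ ≤ Real.arctan (t * Real.tan x) := Real.arctan_strictMono.monotone h1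
  have hup : Real.arctan (t * Real.tan x) ≤ t * Real.tan x :=
    arctan_le_self_of_nonneg (by positivity)
  rw [abs_of_nonneg (by linarith)]
  nlinarith

theorem arctan_linear_approx_bound :
    (∀ x : ℝ, x ∈ Set.Ioo 0 (π / 2) → ∀ t : ℝ, t ∈ Set.Icc (-1 : ℝ) 1 →
      |Real.arctan (t * Real.tan x) - t * x| ≤ |t| * (Real.tan x - x)) ∧
    (∀ w fx ix : ℝ, 0 < w → fx / 2 ∈ Set.Ioo 0 (π / 2) → ix ∈ Set.Icc 0 w →
      |Real.arctan ((ix - w / 2) / (w / (2 * Real.tan (fx / 2)))) -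
          ((ix - w / 2) / w) * fx| ≤ Real.tan (fx / 2) - fx / 2) := by
  have part1 : ∀ x : ℝ, x ∈ Set.Ioo 0 (π / 2) → ∀ t : ℝ, t ∈ Set.Icc (-1 : ℝ) 1 →
      |Real.arctan (t * Real.tan x) - t * x| ≤ |t| * (Real.tan x - x) := by
    intro x hx t ht
    rcases le_or_gt 0 t with h | h
    · rw [abs_of_nonneg h]
      exact main_aux hx h ht.2
    · have h' : 0 ≤ -t := by linarith
      have := main_aux hx h' (by linarith [ht.1])
      rw [abs_of_neg h]
      rw [show (-t) * Real.tan x = -(t * Real.tan x) by ring, Real.arctan_neg] at this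
      rw [show -Real.arctan (t * Real.tan x) - -t * x
        = -(Real.arctan (t * Real.tan x) - t * x) by ring, abs_neg] at this
      exact this
  refine ⟨part1, ?_⟩
  intro w fx ix hw hfx hix
  set x := fx / 2 with hxdef
  set t := (ix - w / 2) / (w / 2) with htdef
  have htanpos : 0 < Real.tan x := Real.tan_pos_of_pos_of_lt_pi_div_two hfx.1 hfx.2
  have ht : t ∈ Set.Icc (-1 : ℝ) 1 := by
    constructor
    · rw [htdef, le_div_iff₀ (by positivity)]; linarith [hix.1]
    · rw [htdef, div_le_one (by positivity)]; linarith [hix.2]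
  have harg : (ix - w / 2) / (w / (2 * Real.tan x)) = t * Real.tan x := by
    rw [htdef]; field_simp
  have hlin : ((ix - w / 2) / w) * fx = t * x := by
    rw [htdef, hxdef]; field_simp
  rw [harg, hlin]
  calc |Real.arctan (t * Real.tan x) - t * x| ≤ |t| * (Real.tan x - x) := part1 x hfx t ht
    _ ≤ 1 * (Real.tan x - x) := by
        apply mul_le_mul_of_nonneg_right (abs_le.mpr ⟨ht.1, ht.2⟩)
        linarith [Real.lt_tan hfx.1 hfx.2]
    _ = Real.tan x - x := one_mul _
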